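/- Let S be a sphere in ℝ³ and let c₁, c₂ be two disjoint circles contained in S. Then either there exists a sphere Σ orthogonal to S, whose center lies on neither circle, such that inversion in Σ maps c₁ bijectively onto c₂, or there exists a plane P through the center of S such that the reflection in P maps c₁ onto c₂. (For any two adjacent generating circles of a discrete channel surface, which are cospherical, there exists a sphere orthogonal to the face-sphere for which inversion interchanges the two generating circles: a 'face-quer-sphere'.) -/

import Mathlib

open RealInnerProductSpace

noncomputable section

set_option maxHeartbeats 1000000

abbrev E3 : Type := EuclideanSpace ℝ (Fin 3)

/-- A circle in `ℝ³`: the intersection of a sphere with a plane, provided this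
intersection contains more than one point. -/
def IsCircle (c : Set E3) : Prop :=
  ∃ (a : E3) (r : ℝ) (u : E3) (d : ℝ), 0 < r ∧ u ≠ 0 ∧
    c = Metric.sphere a r ∩ {x : E3 | ⟪u, x⟫ = d} ∧ c.Nontrivial


noncomputable def cp (x y : E3) : E3 :=
  WithLp.toLp 2 ![x 1 * y 2 - x 2 * y 1, x 2 * y 0 - x 0 * y 2, x 0 * y 1 - x 1 * y 0]

lemma inner3 (x y : E3) : ⟪x,y⟫ = x 0 * y 0 + x 1 * y 1 + x 2 * y 2 := by
  simp [PiLp.inner_apply, Fin.sum_univ_three]; ring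

lemma cp0 (x y : E3) : cp x y 0 = x 1 * y 2 - x 2 * y 1 := rfl
lemma cp1 (x y : E3) : cp x y 1 = x 2 * y 0 - x 0 * y 2 := rfl
lemma cp2 (x y : E3) : cp x y 2 = x 0 * y 1 - x 1 * y 0 := rfl

lemma inner_cp_left (u b : E3) : ⟪u, cp u b⟫ = 0 := by
  rw [inner3, cp0, cp1, cp2]; ring

lemma lagrange (u b : E3) : ⟪cp u b, cp u b⟫ = ⟪u,u⟫*⟪b,b⟫ - ⟪u,b⟫^2 := by
  simp only [inner3, cp0, cp1, cp2]; ring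

lemma real_inner_self_pos' (u : E3) (hu : u ≠ 0) : 0 < ⟪u,u⟫ := by
  have h : 0 < ‖u‖ := norm_pos_iff.2 hu
  rw [real_inner_self_eq_norm_sq]; positivity

lemma perp_three (u b c : E3) (hub : ⟪u,b⟫ = 0) (hu : u ≠ 0) (hb : b ≠ 0)
    (h1 : ⟪c,u⟫ = 0) (h2 : ⟪c,b⟫ = 0) (h3 : ⟪c, cp u b⟫ = 0) : c = 0 := by
  have hu' : 0 < ⟪u,u⟫ := real_inner_self_pos' u hu
  have hb' : 0 < ⟪b,b⟫ := real_inner_self_pos' b hb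
  have lag : ⟪c,c⟫ * (⟪u,u⟫ * ⟪b,b⟫ - ⟪u,b⟫^2) =
      ⟪c, cp u b⟫^2 + ((⟪c,b⟫ * u 0 - ⟪c,u⟫ * b 0)^2 + (⟪c,b⟫ * u 1 - ⟪c,u⟫ * b 1)^2 + (⟪c,b⟫ * u 2 - ⟪c,u⟫ * b 2)^2) := by
    simp only [inner3, cp0, cp1, cp2]; ring
  rw [h1, h2, h3, hub] at lag
  have hcc : ⟪c,c⟫ = 0 := by nlinarith [mul_pos hu' hb']
  exact inner_self_eq_zero.mp hcc

lemma small_d (o n : E3) (R δ : ℝ) (hn : ‖n‖ = 1)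
    (x y : E3) (hxy : x ≠ y)
    (hx : x ∈ Metric.sphere o R) (hy : y ∈ Metric.sphere o R)
    (hx2 : ⟪n, x - o⟫ = δ) (hy2 : ⟪n, y - o⟫ = δ) : δ^2 < R^2 := by
  have hxR : ‖x - o‖ = R := by rwa [Metric.mem_sphere, dist_eq_norm] at hx
  have hyR : ‖y - o‖ = R := by rwa [Metric.mem_sphere, dist_eq_norm] at hy
  have key : ∀ z : E3, ‖z - o‖ = R → ⟪n, z - o⟫ = δ → ‖(z - o) - δ • n‖^2 = R^2 - δ^2 := by
    intro z h1 h2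
    have h3 := norm_sub_sq_real (z - o) (δ • n)
    rw [inner_smul_right, real_inner_comm, h2, h1, norm_smul, Real.norm_eq_abs, hn] at h3
    rw [h3, mul_one, sq_abs]; ring
  by_contra hcon
  push_neg at hcon
  have hx0 : ‖(x - o) - δ • n‖^2 = R^2 - δ^2 := key x hxR hx2
  have hy0 : ‖(y - o) - δ • n‖^2 = R^2 - δ^2 := key y hyR hy2
  have hx1 : ‖(x - o) - δ • n‖ = 0 := by nlinarith [norm_nonneg ((x - o) - δ • n)]
  have hy1 : ‖(y - o) - δ • n‖ = 0 := by nlinarith [norm_nonneg ((y - o) - δ • n)]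
  have ex : x - o = δ • n := by rwa [norm_eq_zero, sub_eq_zero] at hx1
  have ey : y - o = δ • n := by rwa [norm_eq_zero, sub_eq_zero] at hy1
  exact hxy (sub_left_injective (ex.trans ey.symm))

lemma circle_normal (o : E3) (R : ℝ) (hR : 0 < R) (c : Set E3) (hc : IsCircle c)
    (hcS : c ⊆ Metric.sphere o R) :
    ∃ (n : E3) (δ : ℝ), ‖n‖ = 1 ∧ δ^2 < R^2 ∧
      c = Metric.sphere o R ∩ {x : E3 | ⟪n, x - o⟫ = δ} := by
  obtain ⟨a, rt, u, d, hrt, hu, hceq, hcnt⟩ := hc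
  obtain ⟨x, hxc, y, hyc, hxy⟩ := hcnt
  set v : E3 := a - o with hv
  set e : ℝ := (R^2 + ‖v‖^2 - rt^2)/2 with he
  have hmemrt : ∀ z ∈ c, ‖z - a‖ = rt := by
    intro z hz; rw [hceq] at hz; rw [← dist_eq_norm]; exact hz.1
  have hmemP : ∀ z ∈ c, ⟪u, z⟫ = d := by
    intro z hz; rw [hceq] at hz; exact hz.2
  have hmemS : ∀ z ∈ c, ‖z - o‖ = R := by
    intro z hz; rw [← dist_eq_norm]; exact hcS hz
  have hmemQ : ∀ z ∈ c, ⟪v, z - o⟫ = e := by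
    intro z hz
    have h1 : ‖z - a‖ = rt := hmemrt z hz
    have h2 : ‖z - o‖ = R := hmemS z hz
    have h3 : ‖(z - o) - v‖^2 = ‖z - o‖^2 - 2*⟪z - o, v⟫ + ‖v‖^2 := norm_sub_sq_real _ _
    have h4 : (z - o) - v = z - a := by rw [hv]; abel
    rw [h4, h1, h2, real_inner_comm] at h3
    rw [he]; linarith
  have hQS : ∀ z : E3, ‖z - o‖ = R → ⟪v, z - o⟫ = e → ‖z - a‖ = rt := by
    intro z h1 h2
    have h3 : ‖(z - o) - v‖^2 = ‖z - o‖^2 - 2*⟪z - o, v⟫ + ‖v‖^2 := norm_sub_sq_real _ _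
    have h4 : (z - o) - v = z - a := by rw [hv]; abel
    rw [h4, h1, real_inner_comm, h2] at h3
    have : ‖z - a‖^2 = rt^2 := by rw [h3, he]; ring
    nlinarith [norm_nonneg (z - a)]
  by_cases hdep : ∃ μ : ℝ, v = μ • u
  · obtain ⟨μ, hμ⟩ := hdep
    have hconst : μ * (d - ⟪u, o⟫) = e := by
      have h0 := hmemQ x hxc
      rw [hμ, real_inner_smul_left, inner_sub_right] at h0
      rw [hmemP x hxc] at h0; linarith
    have hPQ : ∀ z : E3, ⟪u, z⟫ = d → ⟪v, z - o⟫ = e := by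
      intro z hz
      rw [hμ, real_inner_smul_left, inner_sub_right, hz]; linarith
    have hcSP : c = Metric.sphere o R ∩ {x : E3 | ⟪u, x⟫ = d} := by
      apply Set.Subset.antisymm
      · intro z hz; exact ⟨hcS hz, hmemP z hz⟩
      · rintro z ⟨hz1, hz2⟩
        rw [hceq]
        refine ⟨?_, hz2⟩
        rw [Metric.mem_sphere, dist_eq_norm]
        exact hQS z (by rwa [Metric.mem_sphere, dist_eq_norm] at hz1) (hPQ z hz2)
    have hun : ‖u‖ ≠ 0 := norm_ne_zero_iff.2 hu
    have hplane : {x : E3 | ⟪u, x⟫ = d} = {x : E3 | ⟪‖u‖⁻¹ • u, x - o⟫ = (d - ⟪u, o⟫)/‖u‖} := by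
      ext z
      simp only [Set.mem_setOf_eq, real_inner_smul_left, inner_sub_right]
      constructor
      · intro h; rw [h, div_eq_mul_inv]; ring
      · intro h
        have h' : ‖u‖ * (‖u‖⁻¹ * ⟪u,z⟫ - ‖u‖⁻¹ * ⟪u,o⟫) = ‖u‖ * ((d - ⟪u,o⟫)/‖u‖) := by rw [h]
        rw [mul_sub, ← mul_assoc, ← mul_assoc, mul_inv_cancel₀ hun, one_mul, one_mul,
          mul_div_cancel₀ _ hun] at h'
        linarith
    have hcform : c = Metric.sphere o R ∩ {x : E3 | ⟪‖u‖⁻¹ • u, x - o⟫ = (d - ⟪u, o⟫)/‖u‖} := by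
      rw [hcSP, hplane]
    have hnn : ‖‖u‖⁻¹ • u‖ = 1 := by rw [norm_smul]; simp [hun]
    refine ⟨‖u‖⁻¹ • u, (d - ⟪u, o⟫)/‖u‖, hnn, ?_, hcform⟩
    have hxc' := hcform ▸ hxc
    have hyc' := hcform ▸ hyc
    exact small_d o _ R _ hnn x y hxy hxc'.1 hyc'.1 hxc'.2 hyc'.2
  · exfalso
    have hvne : v ≠ 0 := fun h0 => hdep ⟨0, by rw [h0, zero_smul]⟩
    have huu : ⟪u,u⟫ ≠ 0 := ne_of_gt (real_inner_self_pos' u hu)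
    set t : ℝ := (d - ⟪u,a⟫)/⟪u,u⟫ with ht
    set m : E3 := a + t • u with hm
    have hum : ⟪u, m⟫ = d := by
      rw [hm, inner_add_right, inner_smul_right, ht, div_mul_cancel₀ _ huu]; ring
    have hma : m - a = t • u := by rw [hm]; abel
    have hperp : ∀ z : E3, ⟪u, z - m⟫ = 0 → ⟪z - m, m - a⟫ = 0 := by
      intro z h1
      rw [hma, inner_smul_right, real_inner_comm, h1]; ring
    have hcirc : ∀ z ∈ c, ⟪u, z - m⟫ = 0 ∧ ‖z - m‖^2 = rt^2 - ‖m - a‖^2 := by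
      intro z hz
      have h1 : ⟪u, z - m⟫ = 0 := by rw [inner_sub_right, hmemP z hz, hum]; ring
      refine ⟨h1, ?_⟩
      have h3 : ‖(z - m) + (m - a)‖^2 = ‖z - m‖^2 + 2*⟪z - m, m - a⟫ + ‖m - a‖^2 :=
        norm_add_sq_real _ _
      have h2 : (z - m) + (m - a) = z - a := by abel
      rw [h2, hmemrt z hz, hperp z h1] at h3; linarith
    have hcirc' : ∀ z : E3, ⟪u, z - m⟫ = 0 → ‖z - m‖^2 = rt^2 - ‖m - a‖^2 → z ∈ c := by
      intro z h1 h2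
      rw [hceq]
      constructor
      · rw [Metric.mem_sphere, dist_eq_norm]
        have h3 : ‖(z - m) + (m - a)‖^2 = ‖z - m‖^2 + 2*⟪z - m, m - a⟫ + ‖m - a‖^2 :=
          norm_add_sq_real _ _
        have h4 : (z - m) + (m - a) = z - a := by abel
        rw [h4, hperp z h1, h2] at h3
        nlinarith [norm_nonneg (z - a)]
      · show ⟪u, z⟫ = d
        rw [inner_sub_right] at h1
        rw [← hum]; linarith
    obtain ⟨x₀, hx₀c, hx₀m⟩ : ∃ x₀, x₀ ∈ c ∧ x₀ ≠ m := by
      rcases eq_or_ne x m with h | h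
      · exact ⟨y, hyc, by rw [← h]; exact hxy.symm⟩
      · exact ⟨x, hxc, h⟩
    set b : E3 := x₀ - m with hb
    have hbne : b ≠ 0 := sub_ne_zero.2 hx₀m
    have hub : ⟪u, b⟫ = 0 := (hcirc x₀ hx₀c).1
    have hρ : ‖b‖^2 = rt^2 - ‖m - a‖^2 := (hcirc x₀ hx₀c).2
    have hρpos : 0 < ‖b‖ := norm_pos_iff.2 hbne
    have hwpos : 0 < ⟪cp u b, cp u b⟫ := by
      rw [lagrange, hub]
      have := real_inner_self_pos' u hu
      have := real_inner_self_pos' b hbne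
      nlinarith
    have hwne : cp u b ≠ 0 := fun h => by rw [h] at hwpos; simp at hwpos
    have hwn : 0 < ‖cp u b‖ := norm_pos_iff.2 hwne
    set ζ : ℝ := ‖b‖ / ‖cp u b‖ with hζ
    have hζpos : 0 < ζ := div_pos hρpos hwn
    have huw : ⟪u, cp u b⟫ = 0 := inner_cp_left u b
    have hnrm : ‖ζ • cp u b‖^2 = rt^2 - ‖m - a‖^2 := by
      rw [norm_smul, Real.norm_eq_abs, abs_of_pos hζpos, ← hρ, hζ,
        div_mul_cancel₀ _ (ne_of_gt hwn)]
    have hzp : m + ζ • cp u b ∈ c := by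
      have hsub : m + ζ • cp u b - m = ζ • cp u b := by abel
      apply hcirc'
      · rw [hsub, inner_smul_right, huw]; ring
      · rw [hsub]; exact hnrm
    have hzm : m - ζ • cp u b ∈ c := by
      have hsub : m - ζ • cp u b - m = -(ζ • cp u b) := by abel
      apply hcirc'
      · rw [hsub, inner_neg_right, inner_smul_right, huw]; ring
      · rw [hsub, norm_neg]; exact hnrm
    have hanti : m - b ∈ c := by
      have hsub : m - b - m = -b := by abel
      apply hcirc'
      · rw [hsub, inner_neg_right, hub]; ring
      · rw [hsub, norm_neg, hρ]
    have hvb : ⟪v, b⟫ = 0 := by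
      have h1 := hmemQ x₀ hx₀c
      have h2 := hmemQ (m - b) hanti
      have h3 : ⟪v, (x₀ - o) - (m - b - o)⟫ = 0 := by rw [inner_sub_right, h1, h2]; ring
      have h4 : (x₀ - o) - (m - b - o) = b + b := by rw [hb]; abel
      rw [h4, inner_add_right] at h3; linarith
    have hvw : ⟪v, cp u b⟫ = 0 := by
      have h1 := hmemQ _ hzp
      have h2 := hmemQ _ hzm
      have h3 : ⟪v, (m + ζ • cp u b - o) - (m - ζ • cp u b - o)⟫ = 0 := by
        rw [inner_sub_right, h1, h2]; ring
      have h4 : (m + ζ • cp u b - o) - (m - ζ • cp u b - o)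
          = ζ • cp u b + ζ • cp u b := by abel
      rw [h4, inner_add_right, inner_smul_right] at h3
      have h5 : ζ * ⟪v, cp u b⟫ = 0 := by linarith
      rcases mul_eq_zero.mp h5 with h | h
      · exact absurd h (by positivity)
      · exact h
    set cv : E3 := v - (⟪v,u⟫/⟪u,u⟫) • u with hcv
    have hc1 : ⟪cv, u⟫ = 0 := by
      rw [hcv, inner_sub_left, real_inner_smul_left, div_mul_cancel₀ _ huu]; ring
    have hc2 : ⟪cv, b⟫ = 0 := by
      rw [hcv, inner_sub_left, real_inner_smul_left, hvb, hub]; ring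
    have hc3 : ⟪cv, cp u b⟫ = 0 := by
      rw [hcv, inner_sub_left, real_inner_smul_left, hvw, huw]; ring
    have hzero := perp_three u b cv hub hu hbne hc1 hc2 hc3
    rw [hcv] at hzero
    exact hdep ⟨⟪v,u⟫/⟪u,u⟫, sub_eq_zero.mp hzero⟩

lemma exists_su (R d₁ d₂ k : ℝ) (hR : 0 < R) (h1 : d₁^2 < R^2) (h2 : d₂^2 < R^2)
    (hne : d₁^2 ≠ d₂^2) :
    ∃ s u : ℝ, s*(s + k*u - d₁) = u*(k*s + u - d₂) ∧ s*d₁ + u*d₂ = R^2 ∧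
      0 < s*(s + k*u - d₁) := by
  set γ : ℝ := Real.sqrt (R^2 - d₂^2) with hγdef
  set γ' : ℝ := Real.sqrt (R^2 - d₁^2) with hγ'def
  have hγ2 : γ^2 = R^2 - d₂^2 := Real.sq_sqrt (by linarith)
  have hγ'2 : γ'^2 = R^2 - d₁^2 := Real.sq_sqrt (by linarith)
  have hγpos : 0 < γ := Real.sqrt_pos.2 (by linarith)
  have hγ'pos : 0 < γ' := Real.sqrt_pos.2 (by linarith)
  by_cases hD : 0 < k*R^2 - d₁*d₂
  · -- Sol A
    set Δ : ℝ := d₁*γ + d₂*γ' with hΔdef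
    have hΔ : Δ ≠ 0 := by
      intro h0
      have h4 : (d₁*γ)^2 = (d₂*γ')^2 := by
        have h3 : d₁*γ = -(d₂*γ') := by linarith
        rw [h3]; ring
      rw [mul_pow, mul_pow, hγ2, hγ'2] at h4
      have h5 : (d₁^2 - d₂^2) * R^2 = 0 := by nlinarith
      rcases mul_eq_zero.mp h5 with h | h
      · exact hne (by linarith)
      · nlinarith
    have hΔ2 : 0 < Δ^2 := by positivity
    set s : ℝ := γ*R^2/Δ with hsdef
    set u : ℝ := γ'*R^2/Δ with hudef
    have hsΔ : s*Δ = γ*R^2 := div_mul_cancel₀ _ hΔ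
    have huΔ : u*Δ = γ'*R^2 := div_mul_cancel₀ _ hΔ
    have H1 : (s*(s + k*u - d₁) - u*(k*s + u - d₂))*Δ^2 = 0 := by
      linear_combination (s*Δ + γ*R^2 - d₁*Δ)*hsΔ - (u*Δ + γ'*R^2 - d₂*Δ)*huΔ
        + R^2*(R^2-d₁^2)*hγ2 - R^2*(R^2-d₂^2)*hγ'2
    have H2 : (s*d₁ + u*d₂ - R^2)*Δ = 0 := by
      linear_combination d₁*hsΔ + d₂*huΔ - R^2*hΔdef
    have H3eq : s*(s + k*u - d₁)*Δ^2 = R^2*γ*γ'*(γ*γ' + (k*R^2 - d₁*d₂)) := by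
      linear_combination (s*Δ + γ*R^2 + k*(u*Δ) - d₁*Δ)*hsΔ + k*γ*R^2*huΔ
        - d₁*γ*R^2*hΔdef - γ^2*R^2*hγ'2
    have H3 : 0 < s*(s + k*u - d₁) := by
      have h7 : 0 < s*(s + k*u - d₁)*Δ^2 := by
        rw [H3eq]
        have : 0 < γ*γ' + (k*R^2 - d₁*d₂) := by positivity
        positivity
      nlinarith [h7, hΔ2]
    have e1 := (mul_eq_zero.mp H1).resolve_right (pow_ne_zero 2 hΔ)
    have e2 := (mul_eq_zero.mp H2).resolve_right hΔ
    exact ⟨s, u, by linarith, by linarith, H3⟩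
  · -- Sol B
    push_neg at hD
    set Δ : ℝ := d₂*γ' - d₁*γ with hΔdef
    have hΔ : Δ ≠ 0 := by
      intro h0
      have h4 : (d₁*γ)^2 = (d₂*γ')^2 := by
        have h3 : d₁*γ = d₂*γ' := by linarith
        rw [h3]
      rw [mul_pow, mul_pow, hγ2, hγ'2] at h4
      have h5 : (d₁^2 - d₂^2) * R^2 = 0 := by nlinarith
      rcases mul_eq_zero.mp h5 with h | h
      · exact hne (by linarith)
      · nlinarith
    have hΔ2 : 0 < Δ^2 := by positivity
    set s : ℝ := -(γ*R^2)/Δ with hsdef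
    set u : ℝ := γ'*R^2/Δ with hudef
    have hsΔ : s*Δ = -(γ*R^2) := div_mul_cancel₀ _ hΔ
    have huΔ : u*Δ = γ'*R^2 := div_mul_cancel₀ _ hΔ
    have H1 : (s*(s + k*u - d₁) - u*(k*s + u - d₂))*Δ^2 = 0 := by
      linear_combination (s*Δ - γ*R^2 - d₁*Δ)*hsΔ - (u*Δ + γ'*R^2 - d₂*Δ)*huΔ
        + (d₁*γ + d₂*γ')*R^2*hΔdef + R^2*(R^2-d₁^2)*hγ2 - R^2*(R^2-d₂^2)*hγ'2
    have H2 : (s*d₁ + u*d₂ - R^2)*Δ = 0 := by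
      linear_combination d₁*hsΔ + d₂*huΔ - R^2*hΔdef
    have H3eq : s*(s + k*u - d₁)*Δ^2 = R^2*γ*γ'*(γ*γ' - (k*R^2 - d₁*d₂)) := by
      linear_combination (s*Δ - γ*R^2 + k*(u*Δ) - d₁*Δ)*hsΔ + k*(-(γ*R^2))*huΔ
        + d₁*γ*R^2*hΔdef - R^2*γ^2*hγ'2
    have H3 : 0 < s*(s + k*u - d₁) := by
      have h7 : 0 < s*(s + k*u - d₁)*Δ^2 := by
        rw [H3eq]
        have h8 : 0 < γ*γ' - (k*R^2 - d₁*d₂) := by nlinarith [mul_pos hγpos hγ'pos]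
        positivity
      nlinarith [h7, hΔ2]
    have e1 := (mul_eq_zero.mp H1).resolve_right (pow_ne_zero 2 hΔ)
    have e2 := (mul_eq_zero.mp H2).resolve_right hΔ
    exact ⟨s, u, by linarith, by linarith, H3⟩

lemma inv_scalar (T W β R s u d₁ d₂ lam : ℝ)
    (hlam : lam*T = 2*u*(β-d₂))
    (hT : T = 2*R^2 + 2*u*(β-d₂) - 2*(s*d₁+u*W))
    (hH2 : s*d₁ + u*d₂ = R^2) (hTne : T ≠ 0) :
    lam*(W-β) + β = d₂ := by
  have hE : (lam*(W-β) + β - d₂)*T = 0 := by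
    linear_combination (W-β)*hlam + (β-d₂)*hT - 2*(β-d₂)*hH2
  have := (mul_eq_zero.mp hE).resolve_right hTne
  linarith

lemma inv_norm_scalar (T ip pp r2 R lam : ℝ) (hlam : lam*T = r2)
    (hT : T = R^2 - 2*ip + pp)
    (hpp : pp = r2 + R^2) (hTne : T ≠ 0) :
    lam^2*T + 2*(lam*(ip - pp)) + pp = R^2 := by
  have hE : (lam^2*T + 2*(lam*(ip-pp)) + pp - R^2)*T = 0 := by
    linear_combination (lam*T + r2 + 2*(ip-pp))*hlam + r2*hT + (T - r2)*hpp
  have := (mul_eq_zero.mp hE).resolve_right hTne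
  linarith

lemma mapsTo_aux (o n₁ n₂ : E3) (R d₁ d₂ k s u r : ℝ) (q : E3)
    (hn₁ : ‖n₁‖ = 1) (hn₂ : ‖n₂‖ = 1) (hk : ⟪n₁, n₂⟫ = k)
    (hq : q = o + (s • n₁ + u • n₂))
    (H1 : s*(s + k*u - d₁) = u*(k*s + u - d₂))
    (H2 : s*d₁ + u*d₂ = R^2)
    (hr : 0 < r) (hr2 : r^2 = 2*s*(s + k*u - d₁))
    (hR : 0 < R) :
    Set.MapsTo (EuclideanGeometry.inversion q r)
      (Metric.sphere o R ∩ {x : E3 | ⟪n₁, x - o⟫ = d₁})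
      (Metric.sphere o R ∩ {x : E3 | ⟪n₂, x - o⟫ = d₂}) := by
  have hn₁n₁ : ⟪n₁, n₁⟫ = 1 := by rw [real_inner_self_eq_norm_sq, hn₁]; norm_num
  have hn₂n₂ : ⟪n₂, n₂⟫ = 1 := by rw [real_inner_self_eq_norm_sq, hn₂]; norm_num
  have hk' : ⟪n₂, n₁⟫ = k := by rw [real_inner_comm]; exact hk
  set p : E3 := s • n₁ + u • n₂ with hp
  have hpn1 : ⟪n₁, p⟫ = s + k*u := by
    rw [hp, inner_add_right, inner_smul_right, inner_smul_right, hn₁n₁, hk]; ring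
  have hpn2 : ⟪n₂, p⟫ = k*s + u := by
    rw [hp, inner_add_right, inner_smul_right, inner_smul_right, hn₂n₂, hk']; ring
  have hpp : ⟪p,p⟫ = s*(s + k*u) + u*(k*s + u) := by
    rw [hp, inner_add_left, real_inner_smul_left, real_inner_smul_left]
    rw [show s • n₁ + u • n₂ = p from rfl, hpn1, hpn2]
  have hppr : ⟪p,p⟫ = r^2 + R^2 := by
    rw [hpp]; linear_combination -hr2 - H1 + H2
  have hqo : q - o = p := by rw [hq]; abel
  have hnp2 : ‖p‖^2 = r^2 + R^2 := by rw [← real_inner_self_eq_norm_sq]; exact hppr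
  rintro x ⟨hxS, hxP⟩
  have hxo : ‖x - o‖ = R := by rw [← dist_eq_norm]; exact hxS
  have hxd : ⟪n₁, x - o⟫ = d₁ := hxP
  set W : ℝ := ⟪n₂, x - o⟫ with hW
  have hyp : ⟪x - o, p⟫ = s*d₁ + u*W := by
    rw [hp, inner_add_right, inner_smul_right, inner_smul_right,
      real_inner_comm n₁ (x-o), real_inner_comm n₂ (x-o), hxd, ← hW]
  have hxq : x - q = (x - o) - p := by rw [hq]; abel
  have hT : ‖x - q‖^2 = 2*R^2 + r^2 - 2*(s*d₁ + u*W) := by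
    rw [hxq, norm_sub_sq_real, hxo, hyp, hnp2]; ring
  have hTpos : 0 < ‖x - q‖^2 := by
    have hip : ⟪x - o, p⟫ ≤ ‖x - o‖ * ‖p‖ := real_inner_le_norm _ _
    rw [hxo] at hip
    have h8 : ‖x - q‖^2 = R^2 + ‖p‖^2 - 2*⟪x - o, p⟫ := by
      rw [hxq, norm_sub_sq_real, hxo]; ring
    have hne : R - ‖p‖ ≠ 0 := by
      intro h
      have h' : ‖p‖ = R := by linarith
      rw [h'] at hnp2; nlinarith
    have h13 : 0 < (R - ‖p‖)^2 := by positivity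
    nlinarith [hip, h8, h13]
  have hTne : ‖x - q‖^2 ≠ 0 := ne_of_gt hTpos
  have hinv : EuclideanGeometry.inversion q r x = (r^2/‖x - q‖^2) • (x - q) + q := by
    rw [EuclideanGeometry.inversion]
    rw [dist_eq_norm, div_pow]
    simp [vsub_eq_sub, vadd_eq_add]
  have hio : EuclideanGeometry.inversion q r x - o = (r^2/‖x - q‖^2) • (x - q) + p := by
    rw [hinv, ← hqo]; abel
  set lam : ℝ := r^2/‖x - q‖^2 with hlamdef
  have hlam : lam * ‖x - q‖^2 = r^2 := div_mul_cancel₀ _ hTne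
  constructor
  · -- on sphere
    rw [Metric.mem_sphere, dist_eq_norm]
    have h9 : ⟪lam • (x - q), p⟫ = lam * ((s*d₁+u*W) - (r^2+R^2)) := by
      rw [real_inner_smul_left, hxq, inner_sub_left, hyp, real_inner_comm p p, hppr]
    have hsq : ‖EuclideanGeometry.inversion q r x - o‖^2 = R^2 := by
      rw [hio, norm_add_sq_real, h9, hnp2, norm_smul, Real.norm_eq_abs, mul_pow, sq_abs]
      have hTform : ‖x - q‖^2 = R^2 - 2*(s*d₁+u*W) + (r^2 + R^2) := by rw [hT]; ring
      have := inv_norm_scalar (‖x - q‖^2) (s*d₁+u*W) (r^2+R^2) (r^2) R lam hlam hTform rfl hTne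
      linear_combination this
    have h11 : (‖EuclideanGeometry.inversion q r x - o‖ - R) *
        (‖EuclideanGeometry.inversion q r x - o‖ + R) = 0 := by linear_combination hsq
    rcases mul_eq_zero.mp h11 with h | h
    · linarith
    · nlinarith [norm_nonneg (EuclideanGeometry.inversion q r x - o)]
  · -- on plane 2
    show ⟪n₂, EuclideanGeometry.inversion q r x - o⟫ = d₂
    rw [hio, inner_add_right, inner_smul_right]
    have h12 : ⟪n₂, x - q⟫ = W - (k*s + u) := by
      rw [hxq, inner_sub_right, hpn2, ← hW]
    rw [h12, hpn2]
    have hr2' : r^2 = 2*u*((k*s+u) - d₂) := by linear_combination hr2 + 2*H1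
    have hlam' : lam * ‖x - q‖^2 = 2*u*((k*s+u) - d₂) := by rw [hlam, hr2']
    have hT' : ‖x - q‖^2 = 2*R^2 + 2*u*((k*s+u)-d₂) - 2*(s*d₁ + u*W) := by
      rw [hT, hr2']
    exact inv_scalar (‖x - q‖^2) W (k*s+u) R s u d₁ d₂ lam hlam' hT' H2 hTne

lemma bijOn_inversion (q : E3) (r : ℝ) (hr : r ≠ 0) (A B : Set E3)
    (hA : Set.MapsTo (EuclideanGeometry.inversion q r) A B)
    (hB : Set.MapsTo (EuclideanGeometry.inversion q r) B A) :
    Set.BijOn (EuclideanGeometry.inversion q r) A B := by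
  refine ⟨hA, ?_, ?_⟩
  · intro x hx y hy hxy
    have h0 := congrArg (EuclideanGeometry.inversion q r) hxy
    rwa [EuclideanGeometry.inversion_inversion q hr, EuclideanGeometry.inversion_inversion q hr]
      at h0
  · intro b hb
    exact ⟨EuclideanGeometry.inversion q r b, hB hb,
      EuclideanGeometry.inversion_inversion q hr b⟩


lemma refl_plane_scalar (Wb da k ε ww : ℝ) (hε : ε^2 = 1) (hww : ww = 2-2*(ε*k))
    (hwwne : ww ≠ 0) :
    Wb - 2*(da-ε*Wb)/ww*(k-ε) = ε*da := by
  subst hww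
  have h : 2*(da-ε*Wb)/(2-2*(ε*k))*(k-ε) = Wb - ε*da := by
    rw [div_mul_eq_mul_div, div_eq_iff hwwne]
    linear_combination (2*Wb - 2*k*da)*hε
  linarith

lemma refl_norm_scalar (i ww : ℝ) (hwwne : ww ≠ 0) :
    2*(2*i/ww)*i = (2*i/ww)^2*ww := by
  field_simp

lemma reflect_mapsTo (o na nb : E3) (da k ε R : ℝ) (hna : ‖na‖ = 1) (hnb : ‖nb‖ = 1)
    (hk : ⟪na, nb⟫ = k) (hε : ε^2 = 1) (hwne : na - ε • nb ≠ 0) (hR : 0 < R) :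
    Set.MapsTo (fun x : E3 => x - (2 * ⟪na - ε • nb, x - o⟫ / ⟪na - ε • nb, na - ε • nb⟫) • (na - ε • nb))
      (Metric.sphere o R ∩ {x : E3 | ⟪na, x - o⟫ = da})
      (Metric.sphere o R ∩ {x : E3 | ⟪nb, x - o⟫ = ε*da}) := by
  set w : E3 := na - ε • nb with hwdef
  have hna2 : ⟪na, na⟫ = 1 := by rw [real_inner_self_eq_norm_sq, hna]; norm_num
  have hnb2 : ⟪nb, nb⟫ = 1 := by rw [real_inner_self_eq_norm_sq, hnb]; norm_num
  have hk' : ⟪nb, na⟫ = k := by rw [real_inner_comm]; exact hk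
  have hww : ⟪w,w⟫ = 2 - 2*(ε*k) := by
    rw [hwdef, inner_sub_left, inner_sub_right, inner_sub_right, real_inner_smul_left,
      real_inner_smul_left, inner_smul_right, inner_smul_right, hna2, hnb2, hk, hk']
    linear_combination hε
  have hwwpos : 0 < ⟪w,w⟫ := real_inner_self_pos' w hwne
  have hwwne : ⟪w,w⟫ ≠ 0 := ne_of_gt hwwpos
  have hnbw : ⟪nb, w⟫ = k - ε := by
    rw [hwdef, inner_sub_right, inner_smul_right, hk', hnb2]; ring
  rintro x ⟨hxS, hxP⟩
  have hxo : ‖x - o‖ = R := by rw [← dist_eq_norm]; exact hxS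
  have hxd : ⟪na, x - o⟫ = da := hxP
  set Wb : ℝ := ⟪nb, x - o⟫ with hWb
  have hwx : ⟪w, x - o⟫ = da - ε*Wb := by
    rw [hwdef, inner_sub_left, real_inner_smul_left, hxd, ← hWb]
  set cc : ℝ := 2 * ⟪w, x - o⟫ / ⟪w,w⟫ with hcc
  have himg : x - cc • w - o = (x - o) - cc • w := by abel
  constructor
  · show dist (x - cc • w) o = R
    rw [dist_eq_norm]
    have hsq : ‖x - cc • w - o‖^2 = R^2 := by
      rw [himg, norm_sub_sq_real, inner_smul_right, norm_smul, Real.norm_eq_abs, mul_pow,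
        sq_abs, hxo, ← real_inner_self_eq_norm_sq, real_inner_comm w (x-o), hwx]
      have := refl_norm_scalar (da - ε*Wb) ⟪w,w⟫ hwwne
      rw [hcc, hwx]
      linear_combination -this
    have h11 : (‖x - cc • w - o‖ - R) * (‖x - cc • w - o‖ + R) = 0 := by
      linear_combination hsq
    rcases mul_eq_zero.mp h11 with h | h
    · linarith
    · nlinarith [norm_nonneg (x - cc • w - o)]
  · show ⟪nb, x - cc • w - o⟫ = ε*da
    rw [himg, inner_sub_right, inner_smul_right, hnbw, ← hWb, hcc, hwx]
    exact refl_plane_scalar Wb da k ε ⟪w,w⟫ hε hww hwwne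

lemma reflect_branch (o n₁ n₂ : E3) (R d₁ ε : ℝ) (hR : 0 < R) (hn₁ : ‖n₁‖ = 1)
    (hn₂ : ‖n₂‖ = 1) (hεor : ε = 1 ∨ ε = -1) (hwne : n₁ - ε • n₂ ≠ 0) :
    ∃ u : E3, u ≠ 0 ∧
      (fun x : E3 => x - (2 * ⟪u, x - o⟫ / ⟪u, u⟫) • u) ''
        (Metric.sphere o R ∩ {x : E3 | ⟪n₁, x - o⟫ = d₁})
      = Metric.sphere o R ∩ {x : E3 | ⟪n₂, x - o⟫ = ε*d₁} := by
  have hε2 : ε^2 = 1 := by rcases hεor with h|h <;> rw [h] <;> norm_num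
  have hεne : ε ≠ 0 := by rcases hεor with h|h <;> rw [h] <;> norm_num
  set w : E3 := n₁ - ε • n₂ with hwdef
  have hwwne : ⟪w,w⟫ ≠ 0 := ne_of_gt (real_inner_self_pos' w hwne)
  set ρ : E3 → E3 := fun x : E3 => x - (2 * ⟪w, x - o⟫ / ⟪w, w⟫) • w with hρ
  -- involution
  have hinv : ∀ x : E3, ρ (ρ x) = x := by
    intro x
    have h1 : ρ x - o = (x - o) - (2 * ⟪w, x - o⟫ / ⟪w, w⟫) • w := by rw [hρ]; exact sub_right_comm _ _ _
    have h2 : ⟪w, ρ x - o⟫ = -⟪w, x - o⟫ := by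
      rw [h1, inner_sub_right, inner_smul_right, div_mul_cancel₀ _ hwwne]; ring
    show ρ x - (2 * ⟪w, ρ x - o⟫ / ⟪w, w⟫) • w = x
    have h3 : 2 * -⟪w, x - o⟫ / ⟪w, w⟫ = -(2 * ⟪w, x - o⟫ / ⟪w, w⟫) := by ring
    have h5 : ρ x = x - (2 * ⟪w, x - o⟫ / ⟪w, w⟫) • w := rfl
    rw [h2, h3, neg_smul, sub_neg_eq_add, h5]
    abel
  -- w2 = -ε • w
  have hw2 : n₂ - ε • n₁ = (-ε) • w := by
    have h4 : -ε * ε = -1 := by linear_combination -hε2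
    rw [hwdef, smul_sub, smul_smul, h4, neg_smul, neg_one_smul, sub_neg_eq_add]
    abel
  have hw2ne : n₂ - ε • n₁ ≠ 0 := by
    rw [hw2]; exact smul_ne_zero (neg_ne_zero.2 hεne) hwne
  -- second reflection function equals ρ
  have hfun : (fun x : E3 => x - (2 * ⟪n₂ - ε • n₁, x - o⟫ / ⟪n₂ - ε • n₁, n₂ - ε • n₁⟫) • (n₂ - ε • n₁)) = ρ := by
    funext x
    rw [hρ, hw2]
    congr 1
    rw [real_inner_smul_left, real_inner_smul_left, inner_smul_right, smul_smul]
    have hA : -ε * (-ε * ⟪w,w⟫) = ⟪w,w⟫ := by linear_combination ⟪w,w⟫*hε2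
    rw [hA]
    congr 1
    have : 2 * (-ε * ⟪w, x - o⟫) / ⟪w,w⟫ * -ε = (ε*ε) * (2 * ⟪w, x - o⟫ / ⟪w,w⟫) := by ring
    rw [this]
    have h5 : ε*ε = 1 := by linear_combination hε2
    rw [h5, one_mul]
  have m1 := reflect_mapsTo o n₁ n₂ d₁ ⟪n₁,n₂⟫ ε R hn₁ hn₂ rfl hε2 hwne hR
  have m2' := reflect_mapsTo o n₂ n₁ (ε*d₁) ⟪n₂,n₁⟫ ε R hn₂ hn₁ rfl hε2 hw2ne hR
  rw [hfun] at m2'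
  have hεε : ε*(ε*d₁) = d₁ := by linear_combination d₁*hε2
  rw [hεε] at m2'
  refine ⟨w, hwne, ?_⟩
  apply Set.Subset.antisymm
  · exact Set.MapsTo.image_subset m1
  · intro z hz
    exact ⟨ρ z, m2' hz, hinv z⟩

/-- For two disjoint circles on a sphere `S` there is either a sphere
orthogonal to `S`, whose center lies on neither circle, such that the inversion in it maps
one circle bijectively onto the other, or a plane through the center of `S` such that the
reflection in it maps one circle onto the other (a face-quer-sphere). -/
theorem face_quer_sphere_exists
    (o : E3) (R : ℝ) (hR : 0 < R) (c₁ c₂ : Set E3)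
    (h₁ : IsCircle c₁) (h₂ : IsCircle c₂)
    (h₁S : c₁ ⊆ Metric.sphere o R) (h₂S : c₂ ⊆ Metric.sphere o R)
    (hdisj : Disjoint c₁ c₂) :
    (∃ (q : E3) (r : ℝ), 0 < r ∧ dist q o ^ 2 = r ^ 2 + R ^ 2 ∧
      q ∉ c₁ ∧ q ∉ c₂ ∧ Set.BijOn (EuclideanGeometry.inversion q r) c₁ c₂) ∨
    (∃ u : E3, u ≠ 0 ∧
      (fun x : E3 => x - (2 * ⟪u, x - o⟫ / ⟪u, u⟫) • u) '' c₁ = c₂) := by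
  obtain ⟨n₁, d₁, hn₁, hd₁, hc₁⟩ := circle_normal o R hR c₁ h₁ h₁S
  obtain ⟨n₂, d₂, hn₂, hd₂, hc₂⟩ := circle_normal o R hR c₂ h₂ h₂S
  have hne1 : c₁.Nonempty := by
    obtain ⟨a, r, u, d, hh1, hh2, hh3, hnt⟩ := h₁
    exact hnt.nonempty
  by_cases hdd : d₁^2 = d₂^2
  · right
    have h5 : (d₂ - d₁)*(d₂ + d₁) = 0 := by linear_combination -hdd
    obtain ⟨ε, hεor, hd2⟩ : ∃ ε : ℝ, (ε = 1 ∨ ε = -1) ∧ d₂ = ε*d₁ := by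
      rcases mul_eq_zero.mp h5 with h | h
      · exact ⟨1, Or.inl rfl, by rw [one_mul]; linarith⟩
      · exact ⟨-1, Or.inr rfl, by rw [neg_one_mul]; linarith⟩
    have hε2 : ε^2 = 1 := by rcases hεor with h|h <;> rw [h] <;> norm_num
    by_cases hw : n₁ - ε • n₂ = 0
    · exfalso
      have hee : n₁ = ε • n₂ := by rwa [sub_eq_zero] at hw
      have hsets : {x : E3 | ⟪n₁, x - o⟫ = d₁} = {x : E3 | ⟪n₂, x - o⟫ = d₂} := by
        ext z
        simp only [Set.mem_setOf_eq, hee, real_inner_smul_left, hd2]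
        constructor
        · intro h; linear_combination ε*h - ⟪n₂, z - o⟫*hε2
        · intro h; linear_combination ε*h + d₁*hε2
      have hcc : c₁ = c₂ := by rw [hc₁, hc₂, hsets]
      obtain ⟨z, hz⟩ := hne1
      exact Set.disjoint_left.mp hdisj hz (hcc ▸ hz)
    · obtain ⟨u, hu, himg⟩ := reflect_branch o n₁ n₂ R d₁ ε hR hn₁ hn₂ hεor hw
      refine ⟨u, hu, ?_⟩
      rw [hc₁, hc₂, himg, hd2]
  · left
    obtain ⟨s, u, H1, H2, H3⟩ := exists_su R d₁ d₂ ⟪n₁,n₂⟫ hR hd₁ hd₂ hdd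
    set r : ℝ := Real.sqrt (2*s*(s + ⟪n₁,n₂⟫*u - d₁)) with hrdef
    have hr2 : r^2 = 2*s*(s + ⟪n₁,n₂⟫*u - d₁) := Real.sq_sqrt (by linarith)
    have hr : 0 < r := Real.sqrt_pos.2 (by linarith)
    set q : E3 := o + (s • n₁ + u • n₂) with hqdef
    have m1 := mapsTo_aux o n₁ n₂ R d₁ d₂ ⟪n₁,n₂⟫ s u r q hn₁ hn₂ rfl hqdef H1 H2 hr hr2 hR
    have hk2 : ⟪n₂, n₁⟫ = ⟪n₁,n₂⟫ := real_inner_comm n₁ n₂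
    have H1' : u*(u + ⟪n₁,n₂⟫*s - d₂) = s*(⟪n₁,n₂⟫*u + u*0 + s - d₁) := by linear_combination -H1
    have H1'' : u*(u + ⟪n₁,n₂⟫*s - d₂) = s*(⟪n₁,n₂⟫*u + s - d₁) := by linear_combination -H1
    have H2' : u*d₂ + s*d₁ = R^2 := by linarith
    have hr2' : r^2 = 2*u*(u + ⟪n₁,n₂⟫*s - d₂) := by linear_combination hr2 + 2*H1
    have hq' : q = o + (u • n₂ + s • n₁) := by rw [hqdef, add_comm (s • n₁)]
    have m2 := mapsTo_aux o n₂ n₁ R d₂ d₁ ⟪n₁,n₂⟫ u s r q hn₂ hn₁ hk2 hq' H1'' H2' hr hr2' hR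
    -- distance computation
    have hn₁n₁ : ⟪n₁, n₁⟫ = 1 := by rw [real_inner_self_eq_norm_sq, hn₁]; norm_num
    have hn₂n₂ : ⟪n₂, n₂⟫ = 1 := by rw [real_inner_self_eq_norm_sq, hn₂]; norm_num
    have hqo : q - o = s • n₁ + u • n₂ := by rw [hqdef]; abel
    have hpp : ⟪s • n₁ + u • n₂, s • n₁ + u • n₂⟫ = r^2 + R^2 := by
      rw [inner_add_left, real_inner_smul_left, real_inner_smul_left, inner_add_right,
        inner_add_right, inner_smul_right, inner_smul_right, inner_smul_right,
        inner_smul_right, hn₁n₁, hn₂n₂, hk2]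
      linear_combination -hr2 - H1 + H2
    have hdist : dist q o ^ 2 = r^2 + R^2 := by
      rw [dist_eq_norm, hqo, ← real_inner_self_eq_norm_sq, hpp]
    have hqS : q ∉ Metric.sphere o R := by
      intro hmem
      rw [Metric.mem_sphere] at hmem
      rw [hmem] at hdist
      nlinarith
    refine ⟨q, r, hr, hdist, ?_, ?_, ?_⟩
    · intro hq1; exact hqS (h₁S hq1)
    · intro hq2; exact hqS (h₂S hq2)
    · rw [hc₁, hc₂]
      exact bijOn_inversion q r (ne_of_gt hr) _ _ m1 m2
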